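/- Let n ≥ 2, let U be a nonempty finite type, let d : U → ℝ be a probability distribution (d(u) ≥ 0 for all u and Σ_u d(u) = 1), and let p_u be a positive probability vector on Fin n for each u ∈ U. Then there exists w from the permutations of Fin n to ℝ with w(σ) > 0 for every σ and Σ_σ w(σ) = 1, such that for all i ≠ j in Fin n: Σ_σ w(σ) · [σ⁻¹(i) < σ⁻¹(j)] = Σ_{u ∈ U} d(u) · p_u(i)/(p_u(i)+p_u(j)). -/

import Mathlib

open Finset Equiv

/-- Plackett–Luce weight of a ranking. -/
noncomputable def PL {n : ℕ} (q : Fin n → ℝ) (σ : Equiv.Perm (Fin n)) : ℝ :=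
  ∏ k, q (σ k) / (∑ m ∈ Finset.Ici k, q (σ m))

lemma sum_Ici_succ {n : ℕ} (k : Fin n) (f : Fin (n + 1) → ℝ) :
    ∑ m ∈ Finset.Ici k.succ, f m = ∑ m ∈ Finset.Ici k, f m.succ := by
  rw [show Finset.Ici k.succ = (Finset.Ici k).map ⟨Fin.succ, Fin.succ_injective n⟩ by
    ext m
    simp only [Finset.mem_map, Finset.mem_Ici, Function.Embedding.coeFn_mk]
    constructor
    · intro h
      have hm0 : m ≠ 0 := by
        intro h0
        rw [h0] at h
        exact absurd h (by simp [Fin.le_def])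
      obtain ⟨y, rfl⟩ := Fin.exists_succ_eq.mpr hm0
      exact ⟨y, Fin.succ_le_succ_iff.mp h, rfl⟩
    · rintro ⟨b, hb, rfl⟩; exact Fin.succ_le_succ_iff.mpr hb, Finset.sum_map]
  rfl

lemma PL_rec {n : ℕ} (q : Fin (n + 1) → ℝ) (a : Fin (n + 1)) (τ : Equiv.Perm (Fin n)) :
    PL q (Equiv.Perm.decomposeFin.symm (a, τ)) =
      (q a / ∑ m, q m) * PL (fun k => q (Equiv.swap 0 a k.succ)) τ := by
  set σ := Equiv.Perm.decomposeFin.symm (a, τ) with hσ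
  rw [PL, Fin.prod_univ_succ]
  congr 1
  · rw [show σ 0 = a from Equiv.Perm.decomposeFin_symm_apply_zero a τ]
    congr 1
    rw [show Finset.Ici (0 : Fin (n + 1)) = Finset.univ by ext m; simp [Fin.zero_le]]
    exact Equiv.sum_comp σ q
  · rw [PL]
    refine Finset.prod_congr rfl fun k _ => ?_
    rw [sum_Ici_succ]
    have h : ∀ x : Fin n, σ x.succ = Equiv.swap 0 a (τ x).succ := fun x =>
      Equiv.Perm.decomposeFin_symm_apply_succ τ a x
    simp only [h]

lemma PL_pos {n : ℕ} {q : Fin n → ℝ} (hq : ∀ i, 0 < q i) (σ : Equiv.Perm (Fin n)) :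
    0 < PL q σ := by
  refine Finset.prod_pos fun k _ => div_pos (hq _) ?_
  exact Finset.sum_pos (fun m _ => hq _) ⟨k, Finset.mem_Ici.mpr le_rfl⟩

lemma PL_sum {n : ℕ} (q : Fin n → ℝ) (hq : ∀ i, 0 < q i) : ∑ σ, PL q σ = 1 := by
  induction n with
  | zero => simp [PL]
  | succ n ih =>
    have hS : 0 < ∑ m, q m := Finset.sum_pos (fun m _ => hq m) ⟨0, Finset.mem_univ _⟩
    rw [← Equiv.sum_comp Equiv.Perm.decomposeFin.symm (PL q), Fintype.sum_prod_type]
    have key : ∀ a : Fin (n + 1), ∑ τ : Equiv.Perm (Fin n),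
        PL q (Equiv.Perm.decomposeFin.symm (a, τ)) = q a / ∑ m, q m := by
      intro a
      simp only [PL_rec, ← Finset.mul_sum]
      rw [ih _ (fun k => hq _), mul_one]
    simp only [key]
    rw [← Finset.sum_div, div_self hS.ne']

lemma PL_marginal {n : ℕ} (q : Fin n → ℝ) (hq : ∀ i, 0 < q i) (i j : Fin n) (hij : i ≠ j) :
    ∑ σ, PL q σ * (if σ⁻¹ i < σ⁻¹ j then (1 : ℝ) else 0) = q i / (q i + q j) := by
  induction n with
  | zero => exact i.elim0
  | succ n ih =>
    have hS : 0 < ∑ m, q m := Finset.sum_pos (fun m _ => hq m) ⟨0, Finset.mem_univ _⟩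
    have hqij : 0 < q i + q j := add_pos (hq i) (hq j)
    rw [show (∑ σ, PL q σ * (if σ⁻¹ i < σ⁻¹ j then (1 : ℝ) else 0)) =
        ∑ x : Fin (n + 1) × Equiv.Perm (Fin n),
          PL q (Equiv.Perm.decomposeFin.symm x) *
            (if (Equiv.Perm.decomposeFin.symm x)⁻¹ i < (Equiv.Perm.decomposeFin.symm x)⁻¹ j
              then (1 : ℝ) else 0) from
      (Equiv.sum_comp Equiv.Perm.decomposeFin.symm
        (fun σ => PL q σ * (if σ⁻¹ i < σ⁻¹ j then (1 : ℝ) else 0))).symm,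
      Fintype.sum_prod_type]
    have hinv : ∀ (a : Fin (n + 1)) (τ : Equiv.Perm (Fin n)) (x : Fin (n + 1)),
        (Equiv.Perm.decomposeFin.symm (a, τ))⁻¹ x = 0 ↔ x = a := by
      intro a τ x
      rw [Equiv.Perm.inv_eq_iff_eq, eq_comm,
        show Equiv.Perm.decomposeFin.symm (a, τ) 0 = a from
          Equiv.Perm.decomposeFin_symm_apply_zero a τ, eq_comm]
    have key : ∀ a : Fin (n + 1), (∑ τ : Equiv.Perm (Fin n),
        PL q (Equiv.Perm.decomposeFin.symm (a, τ)) *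
          (if (Equiv.Perm.decomposeFin.symm (a, τ))⁻¹ i <
              (Equiv.Perm.decomposeFin.symm (a, τ))⁻¹ j then (1 : ℝ) else 0)) =
        if a = i then q a / ∑ m, q m
        else if a = j then 0
        else (q a / ∑ m, q m) * (q i / (q i + q j)) := by
      intro a
      by_cases hai : a = i
      · rw [if_pos hai]
        have step : ∀ τ : Equiv.Perm (Fin n),
            PL q (Equiv.Perm.decomposeFin.symm (a, τ)) *
              (if (Equiv.Perm.decomposeFin.symm (a, τ))⁻¹ i <
                  (Equiv.Perm.decomposeFin.symm (a, τ))⁻¹ j then (1 : ℝ) else 0) =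
            PL q (Equiv.Perm.decomposeFin.symm (a, τ)) := by
          intro τ
          have h1 : (Equiv.Perm.decomposeFin.symm (a, τ))⁻¹ i = 0 :=
            (hinv a τ i).mpr hai.symm
          have h2 : (Equiv.Perm.decomposeFin.symm (a, τ))⁻¹ j ≠ 0 := by
            intro h
            exact hij (hai.symm.trans ((hinv a τ j).mp h).symm)
          have hlt : (Equiv.Perm.decomposeFin.symm (a, τ))⁻¹ i <
              (Equiv.Perm.decomposeFin.symm (a, τ))⁻¹ j := by
            rw [h1]
            exact Fin.pos_iff_ne_zero.mpr h2
          rw [if_pos hlt, mul_one]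
        rw [Finset.sum_congr rfl fun τ _ => step τ]
        simp only [PL_rec, ← Finset.mul_sum]
        rw [PL_sum _ (fun k => hq _), mul_one]
      · rw [if_neg hai]
        by_cases haj : a = j
        · rw [if_pos haj]
          refine Finset.sum_eq_zero fun τ _ => ?_
          have h1 : (Equiv.Perm.decomposeFin.symm (a, τ))⁻¹ j = 0 :=
            (hinv a τ j).mpr haj.symm
          have hnlt : ¬ ((Equiv.Perm.decomposeFin.symm (a, τ))⁻¹ i <
              (Equiv.Perm.decomposeFin.symm (a, τ))⁻¹ j) := by
            rw [h1]
            exact Fin.not_lt_zero _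
          rw [if_neg hnlt, mul_zero]
        · rw [if_neg haj]
          have hsi : Equiv.swap 0 a i ≠ 0 := by
            intro h
            rw [Equiv.swap_apply_eq_iff, Equiv.swap_apply_left] at h
            exact hai h.symm
          have hsj : Equiv.swap 0 a j ≠ 0 := by
            intro h
            rw [Equiv.swap_apply_eq_iff, Equiv.swap_apply_left] at h
            exact haj h.symm
          set i' := (Equiv.swap 0 a i).pred hsi with hi'
          set j' := (Equiv.swap 0 a j).pred hsj with hj'
          have hsucci : i'.succ = Equiv.swap 0 a i := Fin.succ_pred _ _
          have hsuccj : j'.succ = Equiv.swap 0 a j := Fin.succ_pred _ _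
          have hq'i : q (Equiv.swap 0 a i'.succ) = q i := by
            rw [hsucci, Equiv.swap_apply_self]
          have hq'j : q (Equiv.swap 0 a j'.succ) = q j := by
            rw [hsuccj, Equiv.swap_apply_self]
          have hij'' : i' ≠ j' := by
            intro h
            apply hij
            have h2 := congrArg Fin.succ h
            rw [hsucci, hsuccj] at h2
            exact (Equiv.swap 0 a).injective h2
          have step : ∀ τ : Equiv.Perm (Fin n),
              PL q (Equiv.Perm.decomposeFin.symm (a, τ)) *
                (if (Equiv.Perm.decomposeFin.symm (a, τ))⁻¹ i <
                    (Equiv.Perm.decomposeFin.symm (a, τ))⁻¹ j then (1 : ℝ) else 0) =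
              (q a / ∑ m, q m) * (PL (fun k => q (Equiv.swap 0 a k.succ)) τ *
                (if τ⁻¹ i' < τ⁻¹ j' then (1 : ℝ) else 0)) := by
            intro τ
            have e1 : (Equiv.Perm.decomposeFin.symm (a, τ))⁻¹ i = (τ⁻¹ i').succ := by
              rw [Equiv.Perm.inv_eq_iff_eq,
                Equiv.Perm.decomposeFin_symm_apply_succ τ a (τ⁻¹ i'),
                Equiv.Perm.inv_def, Equiv.apply_symm_apply, hsucci, Equiv.swap_apply_self]
            have e2 : (Equiv.Perm.decomposeFin.symm (a, τ))⁻¹ j = (τ⁻¹ j').succ := by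
              rw [Equiv.Perm.inv_eq_iff_eq,
                Equiv.Perm.decomposeFin_symm_apply_succ τ a (τ⁻¹ j'),
                Equiv.Perm.inv_def, Equiv.apply_symm_apply, hsuccj, Equiv.swap_apply_self]
            rw [PL_rec, e1, e2, mul_assoc]
            simp only [Fin.succ_lt_succ_iff]
          rw [Finset.sum_congr rfl fun τ _ => step τ, ← Finset.mul_sum]
          congr 1
          rw [ih _ (fun k => hq _) i' j' hij'']
          simp only [hq'i, hq'j]
    rw [Finset.sum_congr rfl fun a _ => key a]
    rw [← Finset.add_sum_erase _ _ (Finset.mem_univ i),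
      ← Finset.add_sum_erase _ _ (Finset.mem_erase.mpr ⟨Ne.symm hij, Finset.mem_univ j⟩)]
    rw [if_pos rfl, if_neg (Ne.symm hij), if_pos rfl]
    have step2 : ∀ a ∈ (Finset.univ.erase i).erase j,
        (if a = i then q a / ∑ m, q m else if a = j then 0
          else (q a / ∑ m, q m) * (q i / (q i + q j))) =
        (q a / ∑ m, q m) * (q i / (q i + q j)) := by
      intro a ha
      simp only [Finset.mem_erase, Finset.mem_univ, and_true] at ha
      rw [if_neg ha.2, if_neg ha.1]
    rw [Finset.sum_congr rfl step2, ← Finset.sum_mul, ← Finset.sum_div,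
      Finset.sum_erase_eq_sub (Finset.mem_erase.mpr ⟨Ne.symm hij, Finset.mem_univ j⟩),
      Finset.sum_erase_eq_sub (Finset.mem_univ i)]
    have h1 := hS.ne'
    have h2 := hqij.ne'
    field_simp
    ring

/-- **Lemma 7 (`G ⊆ Co(R)`).** Every expert-graph edge-weight function — a mixture over a
nonempty finite set of states `u` (with weights `d u`) of pairwise opinions of positive
probability vectors `p u` — is realized by a strictly positive probability distribution `w`
on rankings of `Fin n` (`n ≥ 2`). -/
theorem expert_graph_subset_linear_ordering_polytope (n : ℕ) (hn : 2 ≤ n)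
    (U : Type) [Fintype U] [Nonempty U]
    (d : U → ℝ) (hd : ∀ u, 0 ≤ d u) (hdsum : ∑ u, d u = 1)
    (p : U → Fin n → ℝ) (hp : ∀ u i, 0 < p u i) (hpsum : ∀ u, ∑ i, p u i = 1) :
    ∃ w : Equiv.Perm (Fin n) → ℝ,
      (∀ σ, 0 < w σ) ∧ (∑ σ, w σ = 1) ∧
      ∀ i j : Fin n, i ≠ j →
        ∑ σ, w σ * (if σ⁻¹ i < σ⁻¹ j then (1 : ℝ) else 0) =
          ∑ u, d u * (p u i / (p u i + p u j)) := by
  obtain ⟨u0, hu0⟩ : ∃ u, 0 < d u := by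
    by_contra h
    push_neg at h
    have : (∑ u, d u) ≤ 0 := Finset.sum_nonpos fun u _ => h u
    linarith
  refine ⟨fun σ => ∑ u, d u * PL (p u) σ, ?_, ?_, ?_⟩
  · intro σ
    refine Finset.sum_pos' (fun u _ => mul_nonneg (hd u) (PL_pos (hp u) σ).le)
      ⟨u0, Finset.mem_univ u0, mul_pos hu0 (PL_pos (hp u0) σ)⟩
  · rw [Finset.sum_comm]
    calc ∑ u, ∑ σ, d u * PL (p u) σ = ∑ u, d u * ∑ σ, PL (p u) σ := by
          simp only [← Finset.mul_sum]
      _ = 1 := by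
          rw [Finset.sum_congr rfl fun u _ => by rw [PL_sum _ (hp u), mul_one], hdsum]
  · intro i j hij
    calc ∑ σ, (∑ u, d u * PL (p u) σ) * (if σ⁻¹ i < σ⁻¹ j then (1 : ℝ) else 0)
        = ∑ σ, ∑ u, d u * (PL (p u) σ * (if σ⁻¹ i < σ⁻¹ j then (1 : ℝ) else 0)) := by
          refine Finset.sum_congr rfl fun σ _ => ?_
          rw [Finset.sum_mul]
          exact Finset.sum_congr rfl fun u _ => mul_assoc _ _ _
      _ = ∑ u, ∑ σ, d u * (PL (p u) σ * (if σ⁻¹ i < σ⁻¹ j then (1 : ℝ) else 0)) :=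
          Finset.sum_comm
      _ = ∑ u, d u * (p u i / (p u i + p u j)) := by
          refine Finset.sum_congr rfl fun u _ => ?_
          rw [← Finset.mul_sum, PL_marginal _ (hp u) i j hij]
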